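/- The functions z(s) = log s and y(s) = (1/2)(s·√(s²-1) - log(s + √(s²-1))), defined for s ≥ 1, satisfy z'(s) = sin θ(s) and y'(s) = e^{z(s)} cos θ(s) where sin θ(s) = 1/s, and sin θ satisfies the equation (sin θ)' + sin²θ = 0. Hence the corresponding invariant surface in Sol has intrinsic Gaussian curvature K_int = 0. -/

import Mathlib

open Real

theorem stmt_4 (z y p : ℝ → ℝ)
    (hz : ∀ s, z s = log s)
    (hy : ∀ s, y s = (1/2) * (s * sqrt (s^2 - 1) - log (s + sqrt (s^2 - 1))))
    (hp : ∀ s, p s = 1 / s) :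
    ∀ s ∈ Set.Ioi (1:ℝ),
      HasDerivAt z (p s) s ∧
      HasDerivAt y (exp (z s) * sqrt (1 - p s ^ 2)) s ∧
      HasDerivAt p (-(p s ^ 2)) s ∧
      (-(-(p s ^ 2)) - p s ^ 2 = 0) := by
  intro s hs
  have hs1 : (1:ℝ) < s := hs
  have hs0 : (0:ℝ) < s := lt_trans one_pos hs1
  have hsq : (0:ℝ) < s ^ 2 - 1 := by nlinarith
  set u := Real.sqrt (s ^ 2 - 1) with hu
  have hu0 : 0 < u := Real.sqrt_pos.mpr hsq
  have hu2 : u ^ 2 = s ^ 2 - 1 := Real.sq_sqrt hsq.le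
  have hsu : 0 < s + u := by linarith
  have hzf : z = fun t => Real.log t := funext hz
  have hpf : p = fun t => 1 / t := funext hp
  have hyf : y = fun t => (1/2) * (t * Real.sqrt (t^2 - 1) - Real.log (t + Real.sqrt (t^2 - 1))) :=
    funext hy
  have hps : p s = 1 / s := hp s
  refine ⟨?_, ?_, ?_, by ring⟩
  · rw [hzf, hps]
    simpa [one_div] using Real.hasDerivAt_log hs0.ne'
  · -- derivative of y
    have h1 : HasDerivAt (fun x : ℝ => x ^ 2 - 1) (2 * s) s := by
      simpa using (hasDerivAt_pow 2 s).sub_const 1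
    have h2 : HasDerivAt (fun x : ℝ => Real.sqrt (x ^ 2 - 1)) (s / u) s := by
      have := (Real.hasDerivAt_sqrt hsq.ne').comp s h1
      refine this.congr_deriv ?_
      rw [← hu]
      field_simp
    have h3 : HasDerivAt (fun x : ℝ => x * Real.sqrt (x ^ 2 - 1)) (1 * u + s * (s / u)) s :=
      (hasDerivAt_id s).mul h2
    have h4 : HasDerivAt (fun x : ℝ => x + Real.sqrt (x ^ 2 - 1)) (1 + s / u) s :=
      (hasDerivAt_id s).add h2
    have h5 : HasDerivAt (fun x : ℝ => Real.log (x + Real.sqrt (x ^ 2 - 1)))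
        ((s + u)⁻¹ * (1 + s / u)) s := by
      have := (Real.hasDerivAt_log hsu.ne').comp s h4
      exact this
    have h6 : HasDerivAt y
        ((1/2) * ((1 * u + s * (s / u)) - (s + u)⁻¹ * (1 + s / u))) s := by
      rw [hyf]
      exact ((h3.sub h5).const_mul (1/2))
    have hexp : Real.exp (z s) = s := by rw [hz]; exact Real.exp_log hs0
    have hsqrt : Real.sqrt (1 - p s ^ 2) = u / s := by
      rw [hps, show (1 - (1/s) ^ 2) = (s ^ 2 - 1) / s ^ 2 by field_simp]
      rw [Real.sqrt_div hsq.le, Real.sqrt_sq hs0.le, hu]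
    have hval : (1/2) * ((1 * u + s * (s / u)) - (s + u)⁻¹ * (1 + s / u))
        = Real.exp (z s) * Real.sqrt (1 - p s ^ 2) := by
      rw [hexp, hsqrt]
      have hs' : s ≠ 0 := hs0.ne'
      have hu' : u ≠ 0 := hu0.ne'
      have hsu' : s + u ≠ 0 := hsu.ne'
      have hstep : (s + u)⁻¹ * (1 + s / u) = 1 / u := by
        field_simp
        exact add_comm u s
      rw [hstep]
      field_simp
      linear_combination -hu2
    rwa [hval] at h6
  · rw [hpf]
    simpa [one_div, inv_pow] using hasDerivAt_inv hs0.ne'
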